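/- arXiv:1906.01649 — 2 statements merged into one kernel-verified Lean document; each statement's English description precedes it below -/
import Mathlib

section
/- Let y : [0,∞) → ℝⁿ solve the perturbed generalized Euler equations dy_a/ds = C^c_{ba} H̃^{bd} y_c y_d + F_a(s), with C antisymmetric in (b,a), H̃ symmetric positive-definite, and |F(s)|_{H̃} ≤ Cε e^{-δs}. Then |y(s)|_{H̃} ≤ |y(0)|_{H̃} + Cε/δ for all s ≥ 0, where |x|_{H̃}² = H̃^{ab}x_a x_b. In particular, the generalized Euler asymptotic systems satisfy the boundedness-and-stability condition (Condition 1). -/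
open Finset

section aux

variable {n : ℕ}

private lemma bform_comm (H : Fin n → Fin n → ℝ) (hsym : ∀ a b, H a b = H b a)
    (x z : Fin n → ℝ) :
    (∑ a, ∑ b, H a b * x a * z b) = ∑ a, ∑ b, H a b * z a * x b := by
  rw [Finset.sum_comm]
  exact Finset.sum_congr rfl fun a _ => Finset.sum_congr rfl fun b _ => by rw [hsym]; ring

private lemma bform_nonneg (H : Fin n → Fin n → ℝ)
    (hpos : ∀ x : Fin n → ℝ, x ≠ 0 → 0 < ∑ a, ∑ b, H a b * x a * x b)
    (x : Fin n → ℝ) : 0 ≤ ∑ a, ∑ b, H a b * x a * x b := by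
  rcases eq_or_ne x 0 with h | h
  · simp [h]
  · exact (hpos x h).le

private lemma bform_cs (H : Fin n → Fin n → ℝ) (hsym : ∀ a b, H a b = H b a)
    (hpos : ∀ x : Fin n → ℝ, x ≠ 0 → 0 < ∑ a, ∑ b, H a b * x a * x b)
    (x z : Fin n → ℝ) :
    (∑ a, ∑ b, H a b * x a * z b) ≤
      Real.sqrt (∑ a, ∑ b, H a b * x a * x b) * Real.sqrt (∑ a, ∑ b, H a b * z a * z b) := by
  have hAnn : 0 ≤ ∑ a, ∑ b, H a b * x a * x b := bform_nonneg H hpos x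
  have key : (∑ a, ∑ b, H a b * x a * z b) ^ 2 ≤
      (∑ a, ∑ b, H a b * x a * x b) * ∑ a, ∑ b, H a b * z a * z b := by
    have hq : ∀ t : ℝ, 0 ≤ (∑ a, ∑ b, H a b * z a * z b) * (t * t)
        + (2 * ∑ a, ∑ b, H a b * x a * z b) * t + ∑ a, ∑ b, H a b * x a * x b := by
      intro t
      have h0 : 0 ≤ ∑ a, ∑ b, H a b * (x a + t * z a) * (x b + t * z b) :=
        bform_nonneg H hpos _
      have hexp : (∑ a, ∑ b, H a b * (x a + t * z a) * (x b + t * z b))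
          = (∑ a, ∑ b, H a b * z a * z b) * (t * t)
            + (2 * ∑ a, ∑ b, H a b * x a * z b) * t + ∑ a, ∑ b, H a b * x a * x b := by
        have hpt : ∀ a b : Fin n, H a b * (x a + t * z a) * (x b + t * z b)
            = (H a b * z a * z b) * (t * t)
              + (H a b * x a * z b + H a b * z a * x b) * t
              + H a b * x a * x b := by intro a b; ring
        simp only [hpt, Finset.sum_add_distrib, ← Finset.sum_mul]
        rw [bform_comm H hsym z x]
        ring
      linarith [hexp ▸ h0]
    have hd := discrim_le_zero hq
    rw [discrim] at hd
    nlinarith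
  calc (∑ a, ∑ b, H a b * x a * z b) ≤ |∑ a, ∑ b, H a b * x a * z b| := le_abs_self _
    _ = Real.sqrt ((∑ a, ∑ b, H a b * x a * z b) ^ 2) := (Real.sqrt_sq_eq_abs _).symm
    _ ≤ Real.sqrt ((∑ a, ∑ b, H a b * x a * x b) * ∑ a, ∑ b, H a b * z a * z b) :=
        Real.sqrt_le_sqrt key
    _ = _ := Real.sqrt_mul hAnn _

private lemma cubic_cancel (Cs : Fin n → Fin n → Fin n → ℝ) (H : Fin n → Fin n → ℝ)
    (hanti : ∀ a b c, Cs c b a = - Cs c a b) (v : Fin n → ℝ) :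
    (∑ a, ∑ e, H a e * (∑ b, ∑ c, ∑ d, Cs c b a * H b d * v c * v d) * v e) = 0 := by
  have hT : (∑ a, ∑ e, H a e * (∑ b, ∑ c, ∑ d, Cs c b a * H b d * v c * v d) * v e)
      = ∑ a, ∑ b, ∑ e, ∑ c, ∑ d, H a e * Cs c b a * H b d * v c * v d * v e := by
    refine Finset.sum_congr rfl fun a _ => ?_
    have hexp : ∀ e : Fin n, H a e * (∑ b, ∑ c, ∑ d, Cs c b a * H b d * v c * v d) * v e
        = ∑ b, ∑ c, ∑ d, H a e * Cs c b a * H b d * v c * v d * v e := by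
      intro e
      simp only [Finset.sum_mul, Finset.mul_sum]
      exact Finset.sum_congr rfl fun b _ => Finset.sum_congr rfl fun c _ =>
        Finset.sum_congr rfl fun d _ => by ring
    simp only [hexp]
    exact Finset.sum_comm
  rw [hT]
  have hanti' : ∀ a b : Fin n,
      (∑ e, ∑ c, ∑ d, H b e * Cs c a b * H a d * v c * v d * v e)
      = - ∑ e, ∑ c, ∑ d, H a e * Cs c b a * H b d * v c * v d * v e := by
    intro a b
    have h1 : (∑ e, ∑ c, ∑ d, H b e * Cs c a b * H a d * v c * v d * v e)
        = - ∑ e, ∑ c, ∑ d, H b e * Cs c b a * H a d * v c * v d * v e := by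
      rw [← Finset.sum_neg_distrib]
      refine Finset.sum_congr rfl fun e _ => ?_
      rw [← Finset.sum_neg_distrib]
      refine Finset.sum_congr rfl fun c _ => ?_
      rw [← Finset.sum_neg_distrib]
      refine Finset.sum_congr rfl fun d _ => ?_
      rw [hanti b a c]; ring
    have h2 : (∑ e, ∑ c, ∑ d, H b e * Cs c b a * H a d * v c * v d * v e)
        = ∑ e, ∑ c, ∑ d, H a e * Cs c b a * H b d * v c * v d * v e := by
      have hpt : ∀ e c d : Fin n, H b e * Cs c b a * H a d * v c * v d * v e
          = H a d * Cs c b a * H b e * v c * v e * v d := by intro e c d; ring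
      simp only [hpt]
      calc (∑ e, ∑ c, ∑ d, H a d * Cs c b a * H b e * v c * v e * v d)
          = ∑ e, ∑ d, ∑ c, H a d * Cs c b a * H b e * v c * v e * v d :=
            Finset.sum_congr rfl fun e _ => Finset.sum_comm
        _ = ∑ d, ∑ e, ∑ c, H a d * Cs c b a * H b e * v c * v e * v d := Finset.sum_comm
        _ = ∑ d, ∑ c, ∑ e, H a d * Cs c b a * H b e * v c * v e * v d :=
            Finset.sum_congr rfl fun d _ => Finset.sum_comm
    rw [h1, h2]
  have hS : (∑ a, ∑ b, ∑ e, ∑ c, ∑ d, H a e * Cs c b a * H b d * v c * v d * v e)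
      = - ∑ a, ∑ b, ∑ e, ∑ c, ∑ d, H a e * Cs c b a * H b d * v c * v d * v e := by
    conv_lhs => rw [Finset.sum_comm]
    rw [← Finset.sum_neg_distrib]
    refine Finset.sum_congr rfl fun b _ => ?_
    rw [← Finset.sum_neg_distrib]
    refine Finset.sum_congr rfl fun a _ => ?_
    exact hanti' b a
  linarith [hS]

private lemma sqrt_add_le' (a b : ℝ) (ha : 0 ≤ a) (hb : 0 ≤ b) :
    Real.sqrt (a + b) ≤ Real.sqrt a + Real.sqrt b := by
  have h : a + b ≤ (Real.sqrt a + Real.sqrt b) ^ 2 := by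
    have h1 := Real.sq_sqrt ha
    have h2 := Real.sq_sqrt hb
    nlinarith [mul_nonneg (Real.sqrt_nonneg a) (Real.sqrt_nonneg b)]
  calc Real.sqrt (a + b) ≤ Real.sqrt ((Real.sqrt a + Real.sqrt b) ^ 2) := Real.sqrt_le_sqrt h
    _ = Real.sqrt a + Real.sqrt b := Real.sqrt_sq (by positivity)

end aux

/-- Perturbed generalized Euler equations: if |F(s)|_{H̃} ≤ Cε e^{-δs} then
|y(s)|_{H̃} ≤ |y(0)|_{H̃} + Cε/δ for all s ≥ 0, so the boundedness-and-stability
condition holds. -/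
theorem stmt10 (n : ℕ) (Cs : Fin n → Fin n → Fin n → ℝ) (H : Fin n → Fin n → ℝ)
    (hanti : ∀ a b c, Cs c b a = - Cs c a b)
    (hsym : ∀ a b, H a b = H b a)
    (hpos : ∀ x : Fin n → ℝ, x ≠ 0 → 0 < ∑ a, ∑ b, H a b * x a * x b)
    (C ε δ : ℝ) (hC : 0 < C) (hε : 0 < ε) (hδ : 0 < δ)
    (F : ℝ → Fin n → ℝ) (hFcont : Continuous F) (y : ℝ → Fin n → ℝ)
    (hode : ∀ a s, 0 ≤ s → HasDerivAt (fun t => y t a)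
      ((∑ b, ∑ c, ∑ d, Cs c b a * H b d * y s c * y s d) + F s a) s)
    (hF : ∀ s, 0 ≤ s →
      Real.sqrt (∑ a, ∑ b, H a b * F s a * F s b) ≤ C * ε * Real.exp (-δ * s)) :
    ∀ s, 0 ≤ s →
      Real.sqrt (∑ a, ∑ b, H a b * y s a * y s b) ≤
        Real.sqrt (∑ a, ∑ b, H a b * y 0 a * y 0 b) + C * ε / δ := by
  set Q : ℝ → ℝ := fun s => ∑ a, ∑ b, H a b * y s a * y s b with hQdef
  have hQnn : ∀ s, 0 ≤ Q s := fun s => bform_nonneg H hpos (y s)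
  -- derivative of Q
  have hQd : ∀ s, 0 ≤ s →
      HasDerivAt Q (2 * ∑ a, ∑ b, H a b * F s a * y s b) s := by
    intro s hs
    set D : Fin n → ℝ :=
      fun a => (∑ b, ∑ c, ∑ d, Cs c b a * H b d * y s c * y s d) + F s a with hD
    have h1 : HasDerivAt (fun t => ∑ a, ∑ b, H a b * y t a * y t b)
        (∑ a, ∑ b, (H a b * D a * y s b + H a b * y s a * D b)) s := by
      refine HasDerivAt.fun_sum fun a _ => ?_
      refine HasDerivAt.fun_sum fun b _ => ?_
      have h := ((hode a s hs).const_mul (H a b)).mul (hode b s hs)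
      exact h
    have h1' : HasDerivAt Q
        (∑ a, ∑ b, (H a b * D a * y s b + H a b * y s a * D b)) s := h1
    convert h1' using 1
    have hsplit : ∀ a b : Fin n,
        H a b * D a * y s b + H a b * y s a * D b
        = (H a b * (∑ b', ∑ c, ∑ d, Cs c b' a * H b' d * y s c * y s d) * y s b)
          + (H a b * y s a * (∑ b', ∑ c, ∑ d, Cs c b' b * H b' d * y s c * y s d))
          + (H a b * F s a * y s b) + (H a b * y s a * F s b) := by
      intro a b; simp only [hD]; ring
    simp only [hsplit, Finset.sum_add_distrib]
    have e1 : (∑ a, ∑ b, H a b * (∑ b', ∑ c, ∑ d, Cs c b' a * H b' d * y s c * y s d) * y s b)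
        = 0 := cubic_cancel Cs H hanti (y s)
    have e2 : (∑ a, ∑ b, H a b * y s a * (∑ b', ∑ c, ∑ d, Cs c b' b * H b' d * y s c * y s d))
        = 0 := by
      have h := bform_comm H hsym
        (fun a => ∑ b', ∑ c, ∑ d, Cs c b' a * H b' d * y s c * y s d) (fun a => y s a)
      rw [← h]
      exact e1
    have e4 : (∑ a, ∑ b, H a b * y s a * F s b)
        = ∑ a, ∑ b, H a b * F s a * y s b := by
      have h := bform_comm H hsym (fun a => F s a) (fun a => y s a)
      exact h.symm
    rw [e1, e2, e4]
    ring
  -- main estimate with regularization η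
  have main : ∀ η : ℝ, 0 < η → ∀ s, 0 ≤ s →
      Real.sqrt (Q s) ≤ Real.sqrt (Q 0 + η) + C * ε / δ := by
    intro η hη s hs
    set g : ℝ → ℝ := fun t => Real.sqrt (Q t + η) with hgdef
    set bnd : ℝ → ℝ :=
      fun t => g 0 + (C * ε / δ) * (1 - Real.exp (-δ * t)) with hbnd
    have hgd : ∀ t, 0 ≤ t → HasDerivAt g
        ((2 * ∑ a, ∑ b, H a b * F t a * y t b) / (2 * Real.sqrt (Q t + η))) t := by
      intro t ht
      exact ((hQd t ht).add_const η).sqrt (ne_of_gt (by have := hQnn t; linarith))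
    have hbd : ∀ t : ℝ, HasDerivAt bnd (C * ε * Real.exp (-δ * t)) t := by
      intro t
      have hinner : HasDerivAt (fun u : ℝ => -δ * u) (-δ) t := by
        simpa using (hasDerivAt_id t).const_mul (-δ)
      have he : HasDerivAt (fun u : ℝ => Real.exp (-δ * u)) (Real.exp (-δ * t) * (-δ)) t :=
        HasDerivAt.comp t (Real.hasDerivAt_exp _) hinner
      have h1 : HasDerivAt (fun u : ℝ => 1 - Real.exp (-δ * u))
          (0 - Real.exp (-δ * t) * (-δ)) t := (hasDerivAt_const t 1).sub he
      have h2 := (h1.const_mul (C * ε / δ)).const_add (g 0)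
      refine h2.congr_deriv ?_
      field_simp
      ring
    have hderiv_le : ∀ t, 0 ≤ t →
        (2 * ∑ a, ∑ b, H a b * F t a * y t b) / (2 * Real.sqrt (Q t + η))
          ≤ C * ε * Real.exp (-δ * t) := by
      intro t ht
      have hsq : 0 < Real.sqrt (Q t + η) := Real.sqrt_pos.2 (by have := hQnn t; linarith)
      rw [div_le_iff₀ (by positivity)]
      have hcs := bform_cs H hsym hpos (fun a => F t a) (fun a => y t a)
      have h1 : Real.sqrt (Q t) ≤ Real.sqrt (Q t + η) :=
        Real.sqrt_le_sqrt (by linarith)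
      have h2 : Real.sqrt (∑ a, ∑ b, H a b * F t a * F t b) ≤ C * ε * Real.exp (-δ * t) :=
        hF t ht
      have h3 : (∑ a, ∑ b, H a b * F t a * y t b)
          ≤ (C * ε * Real.exp (-δ * t)) * Real.sqrt (Q t + η) := by
        calc (∑ a, ∑ b, H a b * F t a * y t b)
            ≤ Real.sqrt (∑ a, ∑ b, H a b * F t a * F t b) * Real.sqrt (Q t) := hcs
          _ ≤ (C * ε * Real.exp (-δ * t)) * Real.sqrt (Q t + η) := by
              apply mul_le_mul h2 h1 (Real.sqrt_nonneg _)
              positivity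
      linarith
    -- comparison on Ici 0
    have hmono : AntitoneOn (fun t => g t - bnd t) (Set.Ici (0:ℝ)) := by
      apply antitoneOn_of_hasDerivWithinAt_nonpos (convex_Ici 0)
        (f' := fun t => (2 * ∑ a, ∑ b, H a b * F t a * y t b) / (2 * Real.sqrt (Q t + η))
          - C * ε * Real.exp (-δ * t))
      · intro x hx
        exact (((hgd x hx).sub (hbd x)).continuousAt).continuousWithinAt
      · intro x hx
        rw [interior_Ici] at hx
        exact ((hgd x (le_of_lt hx)).sub (hbd x)).hasDerivWithinAt
      · intro x hx
        rw [interior_Ici] at hx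
        have := hderiv_le x (le_of_lt hx)
        linarith
    have h0 : g s - bnd s ≤ g 0 - bnd 0 := hmono Set.self_mem_Ici hs hs
    have hb0 : bnd 0 = g 0 := by simp [hbnd]
    have hbs : bnd s ≤ g 0 + C * ε / δ := by
      rw [hbnd]
      simp only
      have h1 : 0 < Real.exp (-δ * s) := Real.exp_pos _
      have h2 : (0:ℝ) < C * ε / δ := by positivity
      nlinarith
    have hgs : g s ≤ g 0 + C * ε / δ := by
      have h0' : g s ≤ bnd s := by rw [hb0] at h0; linarith
      exact h0'.trans hbs
    calc Real.sqrt (Q s) ≤ g s := Real.sqrt_le_sqrt (by linarith)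
      _ ≤ g 0 + C * ε / δ := hgs
      _ = Real.sqrt (Q 0 + η) + C * ε / δ := rfl
  -- pass to the limit η → 0
  intro s hs
  by_contra hcon
  push_neg at hcon
  set e := Real.sqrt (Q s) - (Real.sqrt (Q 0) + C * ε / δ) with he
  have hepos : 0 < e := by
    rw [he]
    have : Real.sqrt (Q 0) + C * ε / δ < Real.sqrt (Q s) := hcon
    linarith
  have hm := main ((e / 2) ^ 2) (by positivity) s hs
  have hsplit : Real.sqrt (Q 0 + (e / 2) ^ 2) ≤ Real.sqrt (Q 0) + e / 2 := by
    calc Real.sqrt (Q 0 + (e / 2) ^ 2)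
        ≤ Real.sqrt (Q 0) + Real.sqrt ((e / 2) ^ 2) :=
          sqrt_add_le' _ _ (hQnn 0) (by positivity)
      _ = Real.sqrt (Q 0) + e / 2 := by rw [Real.sqrt_sq (by positivity)]
  have hfin : Real.sqrt (Q s) ≤ Real.sqrt (Q 0) + e / 2 + C * ε / δ := by linarith
  rw [he] at hfin
  linarith
end

section
/- Let y : [0,∞) → ℝⁿ be differentiable with |y'(s) - Q(y(s),y(s))| ≤ g(s) where ⟨x,Q(x,x)⟩ = 0 for all x, g continuous nonnegative with ∫₀^∞ g < ∞. Then y is bounded on [0,∞) and lim sup_{s→∞} |y(s)| ≤ |y(0)| + ∫₀^∞ g(u)du, while lim inf_{s→∞} |y(s)| ≥ |y(0)| - ∫₀^∞ g(u)du; in particular | |y(s)| - |y(0)| | ≤ ∫₀^∞ g for all s. -/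
/-- Differential-inequality version of perturbation stability: if
‖y'(s) - Q(y(s),y(s))‖ ≤ g(s) with ⟨x,Q(x,x)⟩ = 0 and ∫₀^∞ g < ∞, then
|‖y(s)‖ - ‖y(0)‖| ≤ ∫₀^∞ g for all s ≥ 0, with corresponding limsup/liminf bounds. -/
theorem stmt19 {E : Type*} [NormedAddCommGroup E] [InnerProductSpace ℝ E]
    (Q : E →ₗ[ℝ] E →ₗ[ℝ] E) (hQ : ∀ x : E, (inner ℝ x (Q x x) : ℝ) = 0)
    (g : ℝ → ℝ) (hg : Continuous g) (hg0 : ∀ s, 0 ≤ g s)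
    (hgint : MeasureTheory.IntegrableOn g (Set.Ioi 0))
    (y : ℝ → E) (hy : Differentiable ℝ y)
    (hineq : ∀ s, 0 ≤ s → ‖deriv y s - Q (y s) (y s)‖ ≤ g s) :
    (∀ s, 0 ≤ s → |‖y s‖ - ‖y 0‖| ≤ ∫ u in Set.Ioi (0:ℝ), g u) ∧
    Filter.limsup (fun s => ‖y s‖) Filter.atTop ≤ ‖y 0‖ + ∫ u in Set.Ioi (0:ℝ), g u ∧
    ‖y 0‖ - ∫ u in Set.Ioi (0:ℝ), g u ≤ Filter.liminf (fun s => ‖y s‖) Filter.atTop := by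
  set I : ℝ := ∫ u in Set.Ioi (0:ℝ), g u with hI
  set G : ℝ → ℝ := fun t => ∫ u in (0:ℝ)..t, g u with hGdef
  have hGderiv : ∀ t : ℝ, HasDerivAt G (g t) t := fun t =>
    intervalIntegral.integral_hasDerivAt_right (hg.intervalIntegrable 0 t)
      (hg.stronglyMeasurableAtFilter _ _) hg.continuousAt
  have hGle : ∀ s : ℝ, 0 ≤ s → G s ≤ I := by
    intro s hs
    rw [hGdef]
    simp only
    rw [intervalIntegral.integral_of_le hs]
    exact MeasureTheory.setIntegral_mono_set hgint
      (Filter.Eventually.of_forall fun x => hg0 x)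
      (Filter.Eventually.of_forall Set.Ioc_subset_Ioi_self)
  have hG0 : G 0 = 0 := by simp [hGdef]
  -- key pointwise bound
  have key : ∀ s, 0 ≤ s → |‖y s‖ - ‖y 0‖| ≤ I := by
    intro s hs
    have h2 : ∀ ε : ℝ, 0 < ε → |‖y s‖ - ‖y 0‖| ≤ I + ε := by
      intro ε hε
      set φ : ℝ → ℝ := fun t => Real.sqrt ((inner ℝ (y t) (y t) : ℝ) + ε ^ 2) with hφdef
      have hin : ∀ t, (inner ℝ (y t) (y t) : ℝ) = ‖y t‖ ^ 2 := fun t =>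
        real_inner_self_eq_norm_sq (y t)
      have hpos : ∀ t, 0 < (inner ℝ (y t) (y t) : ℝ) + ε ^ 2 := fun t => by
        rw [hin t]; positivity
      have hφpos : ∀ t, 0 < φ t := fun t => Real.sqrt_pos.2 (hpos t)
      have hφderiv : ∀ t, HasDerivAt φ (inner ℝ (deriv y t) (y t) / φ t) t := by
        intro t
        have h1 : HasDerivAt (fun u : ℝ => (inner ℝ (y u) (y u) : ℝ) + ε ^ 2)
            (2 * inner ℝ (deriv y t) (y t)) t := by
          have := (((hy t).hasDerivAt).inner ℝ ((hy t).hasDerivAt)).add_const (ε ^ 2)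
          have heq : (inner ℝ (y t) (deriv y t) : ℝ) + inner ℝ (deriv y t) (y t)
              = 2 * inner ℝ (deriv y t) (y t) := by rw [real_inner_comm]; ring
          rwa [heq] at this
        have hsq := (Real.hasDerivAt_sqrt (ne_of_gt (hpos t))).comp t h1
        have heq2 : (1 / (2 * Real.sqrt ((inner ℝ (y t) (y t) : ℝ) + ε ^ 2)))
            * (2 * inner ℝ (deriv y t) (y t)) = inner ℝ (deriv y t) (y t) / φ t := by
          rw [hφdef]
          have := (hφpos t).ne'
          field_simp
        rwa [heq2] at hsq
      have hyle : ∀ t, ‖y t‖ ≤ φ t := by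
        intro t
        rw [hφdef]
        simp only
        rw [hin t]
        calc ‖y t‖ = Real.sqrt (‖y t‖ ^ 2) := (Real.sqrt_sq (norm_nonneg _)).symm
          _ ≤ Real.sqrt (‖y t‖ ^ 2 + ε ^ 2) := Real.sqrt_le_sqrt (by nlinarith [sq_nonneg ε])
      have hφle : ∀ t, φ t ≤ ‖y t‖ + ε := by
        intro t
        rw [hφdef]
        simp only
        rw [hin t]
        calc Real.sqrt (‖y t‖ ^ 2 + ε ^ 2) ≤ Real.sqrt ((‖y t‖ + ε) ^ 2) := by
              apply Real.sqrt_le_sqrt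
              nlinarith [norm_nonneg (y t), hε.le]
          _ = ‖y t‖ + ε := Real.sqrt_sq (by positivity)
      have hφbound : ∀ t, 0 ≤ t → |inner ℝ (deriv y t) (y t) / φ t| ≤ g t := by
        intro t ht
        have hinner : (inner ℝ (deriv y t) (y t) : ℝ)
            = inner ℝ (deriv y t - Q (y t) (y t)) (y t) := by
          rw [inner_sub_left]
          have h0 : (inner ℝ (Q (y t) (y t)) (y t) : ℝ) = 0 := by
            rw [real_inner_comm]; exact hQ (y t)
          rw [h0]; ring
        have h3 : |(inner ℝ (deriv y t) (y t) : ℝ)| ≤ g t * ‖y t‖ := by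
          rw [hinner]
          calc |(inner ℝ (deriv y t - Q (y t) (y t)) (y t) : ℝ)|
              ≤ ‖deriv y t - Q (y t) (y t)‖ * ‖y t‖ := abs_real_inner_le_norm _ _
            _ ≤ g t * ‖y t‖ :=
                mul_le_mul_of_nonneg_right (hineq t ht) (norm_nonneg _)
        rw [abs_div, abs_of_pos (hφpos t), div_le_iff₀ (hφpos t)]
        calc |(inner ℝ (deriv y t) (y t) : ℝ)| ≤ g t * ‖y t‖ := h3
          _ ≤ g t * φ t := mul_le_mul_of_nonneg_left (hyle t) (hg0 t)
      have hGdiff : Differentiable ℝ G := fun t => (hGderiv t).differentiableAt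
      have hφdiff : Differentiable ℝ φ := fun t => (hφderiv t).differentiableAt
      have hmono1 : MonotoneOn (fun t => G t - φ t) (Set.Ici (0:ℝ)) := by
        apply monotoneOn_of_deriv_nonneg (convex_Ici 0)
          ((hGdiff.sub hφdiff).continuous.continuousOn)
          ((hGdiff.sub hφdiff).differentiableOn)
        intro t ht
        rw [interior_Ici] at ht
        rw [((hGderiv t).sub (hφderiv t)).deriv]
        have := (abs_le.1 (hφbound t ht.le)).2
        linarith
      have hmono2 : MonotoneOn (fun t => G t + φ t) (Set.Ici (0:ℝ)) := by
        apply monotoneOn_of_deriv_nonneg (convex_Ici 0)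
          ((hGdiff.add hφdiff).continuous.continuousOn)
          ((hGdiff.add hφdiff).differentiableOn)
        intro t ht
        rw [interior_Ici] at ht
        rw [((hGderiv t).add (hφderiv t)).deriv]
        have := (abs_le.1 (hφbound t ht.le)).1
        linarith
      have e1 : G 0 - φ 0 ≤ G s - φ s := hmono1 Set.self_mem_Ici hs hs
      have e2 : G 0 + φ 0 ≤ G s + φ s := hmono2 Set.self_mem_Ici hs hs
      have hGsI : G s ≤ I := hGle s hs
      rw [abs_le]
      constructor
      · -- ‖y 0‖ - ‖y s‖ ≤ I + ε  ⇒  -(I+ε) ≤ ‖y s‖ - ‖y 0‖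
        have : φ 0 - φ s ≤ G s := by rw [hG0] at e1; linarith
        have h01 := hyle 0
        have h02 := hφle s
        linarith
      · have : φ s - φ 0 ≤ G s := by rw [hG0] at e2; linarith
        have h01 := hyle s
        have h02 := hφle 0
        linarith
    exact le_of_forall_pos_le_add h2
  refine ⟨key, ?_, ?_⟩
  · have hb : ∀ᶠ s in Filter.atTop, ‖y s‖ ≤ ‖y 0‖ + I := by
      filter_upwards [Filter.eventually_ge_atTop 0] with s hs
      have := (abs_le.1 (key s hs)).2
      linarith
    refine Filter.limsup_le_of_le ?_ hb
    refine Filter.IsBoundedUnder.isCoboundedUnder_le ⟨0, ?_⟩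
    simp only [Filter.eventually_map]
    exact Filter.Eventually.of_forall fun s => norm_nonneg (y s)
  · have hb : ∀ᶠ s in Filter.atTop, ‖y 0‖ - I ≤ ‖y s‖ := by
      filter_upwards [Filter.eventually_ge_atTop 0] with s hs
      have := (abs_le.1 (key s hs)).1
      linarith
    refine Filter.le_liminf_of_le ?_ hb
    refine Filter.IsBoundedUnder.isCoboundedUnder_ge ⟨‖y 0‖ + I, ?_⟩
    simp only [Filter.eventually_map]
    filter_upwards [Filter.eventually_ge_atTop 0] with s hs
    have := (abs_le.1 (key s hs)).2
    linarith
end
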